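/- arXiv:1004.3552 — 3 statements merged into one kernel-verified Lean document; each statement's English description precedes it below -/
import Mathlib

section
/- Let 𝒰 be a group of unitary operators on a complex Hilbert space H, let f ∈ H be a frame vector for 𝒰 with frame operator S, set p_U = S^{-1/2}Uf for U ∈ 𝒰, and let Φ : H → ℓ²(𝒰) be the analysis operator Φg = ∑_{U∈𝒰} ⟨g, p_U⟩ e_U of the Parseval frame {p_U}_{U∈𝒰}. Then Φ is a linear isometry, and Φ intertwines 𝒰 with the left-regular representation: λ_U Φ = Φ U for all U ∈ 𝒰, where λ_U is the unitary on ℓ²(𝒰) determined by λ_U e_V = e_{UV}. In particular Φ* λ_U Φ = U for all U ∈ 𝒰. -/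
local notation "⟪" x ", " y "⟫" => @inner ℂ _ _ x y

-- Evaluation at a coordinate, as a continuous additive monoid homomorphism on `ℓ²`.
private noncomputable def lpEval {α : Type*} (W : α) : lp (fun _ : α => ℂ) 2 →+ ℂ :=
  AddMonoidHom.mk' (fun f => f W) (fun a b => by
    have := lp.coeFn_add a b
    exact congrFun this W)

private lemma lpEval_continuous {α : Type*} (W : α) :
    Continuous (lpEval (α := α) W) := by
  refine (LipschitzWith.of_dist_le_mul (K := 1) fun f g => ?_).continuous
  simp only [dist_eq_norm, NNReal.coe_one, one_mul]
  have h : (f - g) W = f W - g W := congrFun (lp.coeFn_sub f g) W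
  calc ‖lpEval W f - lpEval W g‖ = ‖(f - g) W‖ := by simp [lpEval, h]
    _ ≤ ‖f - g‖ := lp.norm_apply_le_norm (by norm_num) (f - g) W

set_option maxHeartbeats 1000000 in
/-- Let `f` be a frame vector for a group `𝒰` of unitaries on `H` with frame operator `S`,
let `p_U = S^{-1/2}(Uf)` be the canonical Parseval frame, and let `Φ : H → ℓ²(𝒰)` be its
analysis operator. Then `Φ` is a linear isometry and intertwines `𝒰` with the left-regular
representation `λ` of `𝒰` on `ℓ²(𝒰)`: `λ_U Φ = Φ U`, hence `Φ* λ_U Φ = U`, for all `U ∈ 𝒰`. -/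
theorem analysis_operator_intertwines_left_regular
    {H : Type} [NormedAddCommGroup H] [InnerProductSpace ℂ H] [CompleteSpace H]
    (𝒰 : Subgroup (H ≃ₗᵢ[ℂ] H)) [DecidableEq 𝒰] (f : H) (A B : ℝ) (hA : 0 < A) (hAB : A ≤ B)
    -- `{Uf}_{U ∈ 𝒰}` is a frame for `H`
    (hframe : ∀ x : H,
      A * ‖x‖ ^ 2 ≤ ∑' U : 𝒰, ‖⟪(U : H ≃ₗᵢ[ℂ] H) f, x⟫‖ ^ 2 ∧
      ∑' U : 𝒰, ‖⟪(U : H ≃ₗᵢ[ℂ] H) f, x⟫‖ ^ 2 ≤ B * ‖x‖ ^ 2)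
    -- `S` is the frame operator of `{Uf}_{U ∈ 𝒰}`
    (S : H →L[ℂ] H)
    (hS : ∀ x : H, HasSum (fun U : 𝒰 => ⟪(U : H ≃ₗᵢ[ℂ] H) f, x⟫ • (U : H ≃ₗᵢ[ℂ] H) f) (S x))
    -- `R = S^{-1/2}`: the positive square root of the inverse of `S`
    (R : H →L[ℂ] H) (hRpos : R.IsPositive)
    (hRS : (R ∘L R) ∘L S = ContinuousLinearMap.id ℂ H)
    (hSR : S ∘L (R ∘L R) = ContinuousLinearMap.id ℂ H)
    -- `p_U = S^{-1/2} U f`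
    (p : 𝒰 → H) (hp : ∀ U : 𝒰, p U = R ((U : H ≃ₗᵢ[ℂ] H) f))
    -- `Φ` is the analysis operator of `{p_U}` : `(Φ g)(U) = ⟨g, p_U⟩`
    (Φ : H →L[ℂ] lp (fun _ : 𝒰 => ℂ) 2)
    (hΦ : ∀ (g : H) (U : 𝒰), Φ g U = ⟪p U, g⟫)
    -- `λ_U` is the unitary on `ℓ²(𝒰)` determined by `λ_U e_V = e_{UV}`
    (lam : 𝒰 → (lp (fun _ : 𝒰 => ℂ) 2 ≃ₗᵢ[ℂ] lp (fun _ : 𝒰 => ℂ) 2))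
    (hlam : ∀ U V : 𝒰, lam U (lp.single 2 V (1 : ℂ)) = lp.single 2 (U * V) (1 : ℂ)) :
    -- `Φ` is an isometry
    Isometry Φ ∧
    -- `λ_U Φ = Φ U` for all `U ∈ 𝒰`
    (∀ (U : 𝒰) (g : H), lam U (Φ g) = Φ ((U : H ≃ₗᵢ[ℂ] H) g)) ∧
    -- `Φ* λ_U Φ = U` for all `U ∈ 𝒰`
    (∀ (U : 𝒰) (g : H),
      ContinuousLinearMap.adjoint Φ (lam U (Φ g)) = (U : H ≃ₗᵢ[ℂ] H) g) := by
  classical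
  -- R is symmetric
  have hRsa : ∀ a b : H, ⟪R a, b⟫ = ⟪a, R b⟫ := fun a b =>
    (ContinuousLinearMap.isSelfAdjoint_iff_isSymmetric.mp hRpos.isSelfAdjoint) a b
  have hRSapp : ∀ x : H, R (R (S x)) = x := fun x => by
    have := ContinuousLinearMap.ext_iff.mp hRS x
    simpa using this
  have hSRapp : ∀ x : H, S (R (R x)) = x := fun x => by
    have := ContinuousLinearMap.ext_iff.mp hSR x
    simpa using this
  have hRSR : ∀ x : H, R (S (R x)) = x := by
    intro x
    calc R (S (R x)) = R (S (R (R (R (S x))))) := by rw [hRSapp]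
      _ = R (R (S x)) := by rw [hSRapp (R (S x))]
      _ = x := hRSapp x
  -- S commutes with the unitaries in 𝒰
  have hScomm : ∀ (U : 𝒰) (x : H), S ((U : H ≃ₗᵢ[ℂ] H) x) = (U : H ≃ₗᵢ[ℂ] H) (S x) := by
    intro U x
    have h1 : HasSum (fun W : 𝒰 =>
        ⟪((U * W : 𝒰) : H ≃ₗᵢ[ℂ] H) f, (U : H ≃ₗᵢ[ℂ] H) x⟫ • ((U * W : 𝒰) : H ≃ₗᵢ[ℂ] H) f)
        (S ((U : H ≃ₗᵢ[ℂ] H) x)) :=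
      ((Equiv.mulLeft U).hasSum_iff).mpr (hS ((U : H ≃ₗᵢ[ℂ] H) x))
    have h2 : HasSum (fun W : 𝒰 =>
        (U : H ≃ₗᵢ[ℂ] H) (⟪(W : H ≃ₗᵢ[ℂ] H) f, x⟫ • (W : H ≃ₗᵢ[ℂ] H) f))
        ((U : H ≃ₗᵢ[ℂ] H) (S x)) :=
      (hS x).map (U : H ≃ₗᵢ[ℂ] H).toLinearIsometry.toContinuousLinearMap
        (U : H ≃ₗᵢ[ℂ] H).continuous
    have he : (fun W : 𝒰 =>
        ⟪((U * W : 𝒰) : H ≃ₗᵢ[ℂ] H) f, (U : H ≃ₗᵢ[ℂ] H) x⟫ • ((U * W : 𝒰) : H ≃ₗᵢ[ℂ] H) f)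
        = (fun W : 𝒰 => (U : H ≃ₗᵢ[ℂ] H) (⟪(W : H ≃ₗᵢ[ℂ] H) f, x⟫ • (W : H ≃ₗᵢ[ℂ] H) f)) := by
      funext W
      have hc : ((U * W : 𝒰) : H ≃ₗᵢ[ℂ] H) f = (U : H ≃ₗᵢ[ℂ] H) ((W : H ≃ₗᵢ[ℂ] H) f) := rfl
      rw [hc, LinearIsometryEquiv.inner_map_map, map_smul]
    rw [he] at h1
    exact h1.unique h2
  -- R ∘ R commutes with the unitaries
  have hSinj : Function.Injective S := fun a b h => by
    have := congrArg (fun z => R (R z)) h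
    simpa [hRSapp] using this
  have hRRcomm : ∀ (U : 𝒰) (x : H),
      R (R ((U : H ≃ₗᵢ[ℂ] H) x)) = (U : H ≃ₗᵢ[ℂ] H) (R (R x)) := by
    intro U x
    apply hSinj
    rw [hSRapp, hScomm, hSRapp]
  -- R commutes with the unitaries, via uniqueness of positive square roots
  have hRcomm : ∀ (U : 𝒰) (x : H), R ((U : H ≃ₗᵢ[ℂ] H) x) = (U : H ≃ₗᵢ[ℂ] H) (R x) := by
    intro U x
    set u := (U : H ≃ₗᵢ[ℂ] H)
    set T : H →L[ℂ] H :=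
      u.symm.toLinearIsometry.toContinuousLinearMap ∘L
        (R ∘L u.toLinearIsometry.toContinuousLinearMap) with hT
    have hTapp : ∀ y : H, T y = u.symm (R (u y)) := fun y => rfl
    have hRc := (ContinuousLinearMap.isPositive_iff_complex R).mp hRpos
    have hTpos : T.IsPositive := by
      refine (ContinuousLinearMap.isPositive_iff_complex T).mpr fun y => ?_
      have h : ⟪T y, y⟫ = ⟪R (u y), u y⟫ := by
        rw [hTapp]
        have h6 := u.symm.inner_map_map (R (u y)) (u y)
        rw [u.symm_apply_apply] at h6
        exact h6
      rw [h]; exact hRc (u y)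
    have hTT : T ∘L T = R ∘L R := by
      ext y
      show T (T y) = R (R y)
      rw [hTapp, hTapp, u.apply_symm_apply, hRRcomm U, u.symm_apply_apply]
    have hTR : T = R := by
      have h0R : (0 : H →L[ℂ] H) ≤ R := (ContinuousLinearMap.nonneg_iff_isPositive R).mpr hRpos
      have h0T : (0 : H →L[ℂ] H) ≤ T := (ContinuousLinearMap.nonneg_iff_isPositive T).mpr hTpos
      have h1 := CFC.sqrt_unique (a := R * R) (b := T) (by exact hTT) h0T
      rw [CFC.sqrt_unique (a := R * R) rfl h0R] at h1
      exact h1.symm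
    have := congrArg (fun z => u z) (congrArg (fun M : H →L[ℂ] H => M x) hTR)
    simpa [hTapp, u.apply_symm_apply] using this
  -- inner products are preserved by Φ
  have hinner : ∀ x y : H, ⟪Φ x, Φ y⟫ = ⟪x, y⟫ := by
    intro x y
    have key : HasSum (fun U : 𝒰 => ⟪x, p U⟫ * ⟪p U, y⟫) ⟪x, y⟫ := by
      have h1 := (hS (R y)).map (innerSL ℂ (R x)) (innerSL ℂ (R x)).continuous
      have he : (fun U : 𝒰 => innerSL ℂ (R x) (⟪(U : H ≃ₗᵢ[ℂ] H) f, R y⟫ • (U : H ≃ₗᵢ[ℂ] H) f))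
          = fun U : 𝒰 => ⟪x, p U⟫ * ⟪p U, y⟫ := by
        funext U
        simp only [Function.comp, innerSL_apply_apply, inner_smul_right, hp U]
        rw [hRsa ((U : H ≃ₗᵢ[ℂ] H) f) y, ← hRsa x ((U : H ≃ₗᵢ[ℂ] H) f)]
        ring
      have hs : innerSL ℂ (R x) (S (R y)) = ⟪x, y⟫ := by
        show ⟪R x, S (R y)⟫ = ⟪x, y⟫
        rw [hRsa, hRSR]
      simp only [Function.comp_def] at h1
      rw [he, hs] at h1
      exact h1
    rw [lp.inner_eq_tsum]
    have he2 : (fun U : 𝒰 => ⟪Φ x U, Φ y U⟫) = fun U : 𝒰 => ⟪x, p U⟫ * ⟪p U, y⟫ := by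
      funext U
      rw [hΦ, hΦ, RCLike.inner_apply, ← inner_conj_symm x (p U), mul_comm]
    rw [he2, key.tsum_eq]
  have hnorm : ∀ x : H, ‖Φ x‖ = ‖x‖ := by
    intro x
    have h1 := hinner x x
    rw [inner_self_eq_norm_sq_to_K (𝕜 := ℂ) (Φ x), inner_self_eq_norm_sq_to_K (𝕜 := ℂ) x] at h1
    have h2 : ‖Φ x‖ ^ 2 = ‖x‖ ^ 2 := by exact_mod_cast h1
    calc ‖Φ x‖ = Real.sqrt (‖Φ x‖ ^ 2) := (Real.sqrt_sq (norm_nonneg _)).symm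
      _ = Real.sqrt (‖x‖ ^ 2) := by rw [h2]
      _ = ‖x‖ := Real.sqrt_sq (norm_nonneg _)
  have hiso : Isometry Φ := AddMonoidHomClass.isometry_of_norm Φ hnorm
  -- the left regular representation acts by translation of coordinates
  have hlam_apply : ∀ (U : 𝒰) (x : lp (fun _ : 𝒰 => ℂ) 2) (W : 𝒰),
      lam U x W = x (U⁻¹ * W) := by
    intro U x W
    have h1 : HasSum (fun V : 𝒰 => lp.single 2 V (x V)) x :=
      lp.hasSum_single (by norm_num) x
    have h2 : HasSum (fun V : 𝒰 => lam U (lp.single 2 V (x V))) (lam U x) :=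
      h1.map (lam U).toLinearIsometry.toContinuousLinearMap (lam U).continuous
    have h3 : ∀ V : 𝒰, lam U (lp.single 2 V (x V)) = lp.single 2 (U * V) (x V) := by
      intro V
      have hv : lp.single (E := fun _ : 𝒰 => ℂ) 2 V (x V) = x V • lp.single 2 V (1 : ℂ) := by
        rw [← lp.single_smul]
        norm_num
      have hv2 : lp.single (E := fun _ : 𝒰 => ℂ) 2 (U * V) (x V)
          = x V • lp.single 2 (U * V) (1 : ℂ) := by
        rw [← lp.single_smul]
        norm_num
      rw [hv, map_smul, hlam, hv2]
    have h4 : HasSum (fun V : 𝒰 => lpEval W (lam U (lp.single 2 V (x V)))) (lpEval W (lam U x)) :=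
      h2.map (lpEval W) (lpEval_continuous W)
    have h5 : (fun V : 𝒰 => lpEval W (lam U (lp.single 2 V (x V))))
        = fun V : 𝒰 => if V = U⁻¹ * W then x (U⁻¹ * W) else 0 := by
      funext V
      show (lam U (lp.single 2 V (x V))) W = _
      rw [h3, lp.single_apply]
      by_cases h : V = U⁻¹ * W
      · subst h
        rw [Pi.single_apply, if_pos (by group), if_pos rfl]
      · rw [Pi.single_apply, if_neg (by
          intro hW
          apply h
          rw [hW]; group), if_neg h]
    rw [h5] at h4
    exact h4.unique (hasSum_ite_eq (U⁻¹ * W) (x (U⁻¹ * W)))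
  -- the intertwining relation
  have h2 : ∀ (U : 𝒰) (g : H), lam U (Φ g) = Φ ((U : H ≃ₗᵢ[ℂ] H) g) := by
    intro U g
    apply lp.ext
    funext W
    rw [show (lam U (Φ g) : ∀ _ : 𝒰, ℂ) W = (Φ g) (U⁻¹ * W) from hlam_apply U (Φ g) W]
    rw [hΦ, hΦ, hp, hp]
    have hc : ((U⁻¹ * W : 𝒰) : H ≃ₗᵢ[ℂ] H) f
        = ((U⁻¹ : 𝒰) : H ≃ₗᵢ[ℂ] H) ((W : H ≃ₗᵢ[ℂ] H) f) := rfl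
    rw [hc, hRcomm U⁻¹]
    have h6 := (U : H ≃ₗᵢ[ℂ] H).symm.inner_map_map (R ((W : H ≃ₗᵢ[ℂ] H) f))
      ((U : H ≃ₗᵢ[ℂ] H) g)
    rw [(U : H ≃ₗᵢ[ℂ] H).symm_apply_apply] at h6
    exact h6
  refine ⟨hiso, h2, ?_⟩
  intro U g
  rw [h2 U g]
  apply ext_inner_left ℂ
  intro v
  rw [ContinuousLinearMap.adjoint_inner_right]
  exact hinner v _
end

section
/- Let G be a countable group, μ a unimodular multiplier on G satisfying the cocycle identity and μ(g, e) = μ(e, g) = 1, let π be a μ-projective unitary representation of G on a complex Hilbert space H, and suppose {π(g)f}_{g∈G} is a frame for H with frame operator S. Set f₁ = S^{-1/2}f. Then there exist a complex Hilbert space K, a μ-projective unitary representation π' of G on K, and a vector f₂ ∈ K such that {π'(g)f₂}_{g∈G} is a Parseval frame for K and {π(g)f₁ ⊕ π'(g)f₂}_{g∈G} is an orthonormal basis for H ⊕ K. -/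
local notation "⟪" x ", " y "⟫" => @inner ℂ _ _ x y

noncomputable section ProjDilationAux

open scoped ComplexConjugate ENNReal

lemma unimod_conj_mul {z : ℂ} (hz : ‖z‖ = 1) : conj z * z = 1 := by
  rw [mul_comm, Complex.mul_conj, Complex.normSq_eq_norm_sq, hz]
  norm_num

lemma unimod_mul_conj {z : ℂ} (hz : ‖z‖ = 1) : z * conj z = 1 := by
  rw [mul_comm]; exact unimod_conj_mul hz

lemma unimod_ne_zero {z : ℂ} (hz : ‖z‖ = 1) : z ≠ 0 := by
  intro h; rw [h] at hz; simp at hz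

lemma unimod_inv {z : ℂ} (hz : ‖z‖ = 1) : z⁻¹ = conj z :=
  eq_comm.mp (eq_inv_of_mul_eq_one_left (unimod_conj_mul hz))

lemma mul_conj_norm' (z : ℂ) : z * conj z = ((‖z‖ ^ 2 : ℝ) : ℂ) := by
  rw [Complex.mul_conj, Complex.normSq_eq_norm_sq]

variable {G : Type*}

lemma twist_mem (e : G ≃ G) (w : G → ℂ) (hw : ∀ h, ‖w h‖ = 1)
    (c : lp (fun _ : G => ℂ) 2) : Memℓp (fun h => w h * c (e h)) 2 := by
  apply memℓp_gen
  have hs : Summable (fun h : G => ‖c h‖ ^ (2 : ℝ≥0∞).toReal) :=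
    (lp.memℓp c).summable (by norm_num)
  have h2 := e.summable_iff.mpr hs
  refine h2.congr fun h => ?_
  simp [Function.comp, norm_mul, hw]

/-- The element of `ℓ²(G)` obtained by twisted translation. -/
noncomputable def twistElem (e : G ≃ G) (w : G → ℂ) (hw : ∀ h, ‖w h‖ = 1)
    (c : lp (fun _ : G => ℂ) 2) : lp (fun _ : G => ℂ) 2 :=
  ⟨fun h => w h * c (e h), twist_mem e w hw c⟩

@[simp] lemma twistElem_apply (e : G ≃ G) (w : G → ℂ) (hw : ∀ h, ‖w h‖ = 1)
    (c : lp (fun _ : G => ℂ) 2) (h : G) :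
    (twistElem e w hw c : ∀ _ : G, ℂ) h = w h * c (e h) := rfl

/-- Twisted translation unitary on `ℓ²(G)`. -/
noncomputable def twist (e : G ≃ G) (w : G → ℂ) (hw : ∀ h, ‖w h‖ = 1) :
    lp (fun _ : G => ℂ) 2 ≃ₗᵢ[ℂ] lp (fun _ : G => ℂ) 2 where
  toFun c := twistElem e w hw c
  invFun c := twistElem e.symm (fun h => conj (w (e.symm h)))
      (fun h => by simpa using hw (e.symm h)) c
  left_inv c := by
    apply lp.ext
    funext h
    show conj (w (e.symm h)) * (w (e.symm h) * c (e (e.symm h))) = c h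
    simp [← mul_assoc, unimod_conj_mul (hw _)]
  right_inv c := by
    apply lp.ext
    funext h
    show w h * (conj (w (e.symm (e h))) * c (e.symm (e h))) = c h
    simp [← mul_assoc, unimod_mul_conj (hw _)]
  map_add' c d := by
    apply lp.ext
    funext h
    show w h * ((c + d) (e h)) = w h * c (e h) + w h * d (e h)
    rw [lp.coeFn_add]
    simp [mul_add]
  map_smul' a c := by
    apply lp.ext
    funext h
    show w h * ((a • c) (e h)) = a * (w h * c (e h))
    rw [lp.coeFn_smul]
    simp; ring
  norm_map' c := by
    show ‖twistElem e w hw c‖ = ‖c‖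
    have h2 : (0:ℝ) < (2 : ℝ≥0∞).toReal := by norm_num
    rw [lp.norm_eq_tsum_rpow h2, lp.norm_eq_tsum_rpow h2]
    congr 1
    have h3 : ∀ h : G, ‖(twistElem e w hw c) h‖ ^ (2 : ℝ≥0∞).toReal
        = ‖c (e h)‖ ^ (2 : ℝ≥0∞).toReal := fun h => by
      simp [norm_mul, hw]
    exact (tsum_congr h3).trans (e.tsum_eq fun h => ‖c h‖ ^ (2 : ℝ≥0∞).toReal)

@[simp] lemma twist_apply (e : G ≃ G) (w : G → ℂ) (hw : ∀ h, ‖w h‖ = 1)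
    (c : lp (fun _ : G => ℂ) 2) (h : G) :
    (twist e w hw c : ∀ _ : G, ℂ) h = w h * c (e h) := rfl

lemma rpow_toReal_two (x : ℝ) : x ^ (2 : ℝ≥0∞).toReal = x ^ 2 := by
  rw [ENNReal.toReal_ofNat, show (2:ℝ) = ((2:ℕ):ℝ) by norm_num, Real.rpow_natCast]

variable {H : Type*} [NormedAddCommGroup H] [InnerProductSpace ℂ H]

lemma analysis_mem (v : G → H) (hv : ∀ x : H, HasSum (fun g => ‖⟪v g, x⟫‖ ^ 2) (‖x‖ ^ 2))
    (x : H) : Memℓp (fun g => ⟪v g, x⟫) 2 := by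
  apply memℓp_gen
  refine ((hv x).summable).congr fun g => ?_
  rw [rpow_toReal_two]

/-- The analysis operator of a Parseval frame. -/
noncomputable def analysisOp (v : G → H)
    (hv : ∀ x : H, HasSum (fun g => ‖⟪v g, x⟫‖ ^ 2) (‖x‖ ^ 2)) :
    H →ₗᵢ[ℂ] lp (fun _ : G => ℂ) 2 where
  toFun x := ⟨fun g => ⟪v g, x⟫, analysis_mem v hv x⟩
  map_add' x y := by
    apply lp.ext
    funext g
    show ⟪v g, x + y⟫ = _
    rw [lp.coeFn_add, inner_add_right]
    rfl
  map_smul' a x := by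
    apply lp.ext
    funext g
    show ⟪v g, a • x⟫ = _
    rw [lp.coeFn_smul, inner_smul_right]
    rfl
  norm_map' x := by
    show ‖(⟨fun g => ⟪v g, x⟫, analysis_mem v hv x⟩ : lp (fun _ : G => ℂ) 2)‖ = ‖x‖
    have h2 : (0:ℝ) < (2 : ℝ≥0∞).toReal := by norm_num
    rw [lp.norm_eq_tsum_rpow h2]
    have h3 : (∑' g : G, ‖(⟨fun g => ⟪v g, x⟫, analysis_mem v hv x⟩ :
        lp (fun _ : G => ℂ) 2) g‖ ^ (2 : ℝ≥0∞).toReal) = ‖x‖ ^ 2 := by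
      rw [tsum_congr (fun g : G => rpow_toReal_two ‖⟪v g, x⟫‖)]
      exact (hv x).tsum_eq
    rw [h3, ENNReal.toReal_ofNat, show ‖x‖ ^ 2 = ‖x‖ ^ (2:ℝ) by
      rw [show (2:ℝ) = ((2:ℕ):ℝ) by norm_num, Real.rpow_natCast],
      ← Real.rpow_mul (norm_nonneg x)]
    norm_num

@[simp] lemma analysisOp_apply (v : G → H)
    (hv : ∀ x : H, HasSum (fun g => ‖⟪v g, x⟫‖ ^ 2) (‖x‖ ^ 2)) (x : H) (g : G) :
    (analysisOp v hv x : ∀ _ : G, ℂ) g = ⟪v g, x⟫ := rfl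

/-- Restriction of a linear isometry equivalence to an invariant submodule. -/
noncomputable def restrictLIE {E : Type*} [NormedAddCommGroup E] [Module ℂ E]
    (T : E ≃ₗᵢ[ℂ] E) (p : Submodule ℂ E)
    (h1 : ∀ x ∈ p, T x ∈ p) (h2 : ∀ x ∈ p, T.symm x ∈ p) : p ≃ₗᵢ[ℂ] p where
  toFun x := ⟨T x, h1 x x.2⟩
  invFun x := ⟨T.symm x, h2 x x.2⟩
  left_inv x := Subtype.ext (T.symm_apply_apply x)
  right_inv x := Subtype.ext (T.apply_symm_apply x)
  map_add' x y := Subtype.ext (by simp)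
  map_smul' a x := Subtype.ext (by simp)
  norm_map' x := T.norm_map x

@[simp] lemma restrictLIE_coe {E : Type*} [NormedAddCommGroup E] [Module ℂ E]
    (T : E ≃ₗᵢ[ℂ] E) (p : Submodule ℂ E)
    (h1 : ∀ x ∈ p, T x ∈ p) (h2 : ∀ x ∈ p, T.symm x ∈ p) (x : p) :
    ((restrictLIE T p h1 h2 x : p) : E) = T x := rfl

/-- positive operators with equal squares are equal -/
lemma pos_sq_inj {H : Type} [NormedAddCommGroup H] [InnerProductSpace ℂ H] [CompleteSpace H]
    (R T : H →L[ℂ] H) (hR : R.IsPositive) (hT : T.IsPositive) (h : T * T = R * R) : T = R := by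
  have hR' := (ContinuousLinearMap.nonneg_iff_isPositive R).mpr hR
  have hT' := (ContinuousLinearMap.nonneg_iff_isPositive T).mpr hT
  have h1 := CFC.sqrt_sq T hT'
  have h2 := CFC.sqrt_sq R hR'
  rw [pow_two, h, ← pow_two] at h1
  rw [← h1, h2]

end ProjDilationAux

open scoped ComplexConjugate ENNReal

set_option maxHeartbeats 1000000 in
/-- **Dilation theorem for frames generated by projective unitary representations.**
Let `π` be a `μ`-projective unitary representation of a countable group `G` on `H` and let
`{π(g)f}` be a frame for `H` with frame operator `S`; set `f₁ = S^{-1/2}f`. Then there exist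
a Hilbert space `K`, a `μ`-projective unitary representation `π'` of `G` on `K`, and
`f₂ ∈ K` such that `{π'(g)f₂}` is a Parseval frame for `K` and `{π(g)f₁ ⊕ π'(g)f₂}` is an
orthonormal basis of `H ⊕ K`. -/
theorem projective_rep_dilation
    (G : Type) [Group G] [Countable G]
    {H : Type} [NormedAddCommGroup H] [InnerProductSpace ℂ H] [CompleteSpace H]
    (μ : G → G → ℂ) (hμ_uni : ∀ g h : G, ‖μ g h‖ = 1)
    (hμ_cocycle : ∀ g₁ g₂ g₃ : G, μ g₁ (g₂ * g₃) * μ g₂ g₃ = μ (g₁ * g₂) g₃ * μ g₁ g₂)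
    (hμ_one : ∀ g : G, μ g 1 = 1 ∧ μ 1 g = 1)
    -- `π` is a `μ`-projective unitary representation of `G` on `H`
    (π : G → (H ≃ₗᵢ[ℂ] H))
    (hπ : ∀ (g h : G) (x : H), π g (π h x) = μ g h • π (g * h) x)
    -- `{π(g)f}` is a frame for `H`
    (f : H) (A B : ℝ) (hA : 0 < A) (hAB : A ≤ B)
    (hframe : ∀ x : H,
      A * ‖x‖ ^ 2 ≤ ∑' g : G, ‖⟪π g f, x⟫‖ ^ 2 ∧
      ∑' g : G, ‖⟪π g f, x⟫‖ ^ 2 ≤ B * ‖x‖ ^ 2)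
    -- `S` is the frame operator of `{π(g)f}`
    (S : H →L[ℂ] H)
    (hS : ∀ x : H, HasSum (fun g : G => ⟪π g f, x⟫ • π g f) (S x))
    -- `R = S^{-1/2}`: the positive square root of the inverse of `S`
    (R : H →L[ℂ] H) (hRpos : R.IsPositive)
    (hRS : (R ∘L R) ∘L S = ContinuousLinearMap.id ℂ H)
    (hSR : S ∘L (R ∘L R) = ContinuousLinearMap.id ℂ H)
    -- `f₁ = S^{-1/2} f`
    (f₁ : H) (hf₁ : f₁ = R f) :
    ∃ (K : Type) (_ : NormedAddCommGroup K) (_ : InnerProductSpace ℂ K) (_ : CompleteSpace K)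
      (π' : G → (K ≃ₗᵢ[ℂ] K)) (f₂ : K),
      -- `π'` is a `μ`-projective unitary representation of `G` on `K`
      (∀ (g h : G) (y : K), π' g (π' h y) = μ g h • π' (g * h) y) ∧
      -- `{π'(g)f₂}` is a Parseval frame for `K`
      (∀ y : K, ∑' g : G, ‖⟪π' g f₂, y⟫‖ ^ 2 = ‖y‖ ^ 2) ∧
      -- `{π(g)f₁ ⊕ π'(g)f₂}` is an orthonormal basis of `H ⊕ K`
      Orthonormal ℂ (fun g : G =>
        (WithLp.equiv 2 (H × K)).symm (π g f₁, π' g f₂)) ∧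
      (Submodule.span ℂ (Set.range fun g : G =>
        (WithLp.equiv 2 (H × K)).symm (π g f₁, π' g f₂))).topologicalClosure = ⊤ := by
  classical
  have hπ1 : ∀ x : H, π (1 : G) x = x := by
    intro x
    have h := hπ 1 1 x
    rw [(hμ_one 1).1, one_smul, one_mul] at h
    exact (π (1 : G)).injective h
  have hπsymm : ∀ (g : G) (y : H), (π g).symm y = conj (μ g g⁻¹) • π g⁻¹ y := by
    intro g y
    apply (π g).injective
    rw [(π g).apply_symm_apply, LinearIsometryEquiv.map_smul, hπ g g⁻¹ y, smul_smul,
      unimod_conj_mul (hμ_uni g g⁻¹), one_smul, mul_inv_cancel, hπ1]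
  have hScomm : ∀ (g : G) (x : H), S (π g x) = π g (S x) := by
    intro g x
    have h1 : HasSum (fun h : G => ⟪π (g * h) f, π g x⟫ • π (g * h) f) (S (π g x)) := by
      have h0 := ((Equiv.mulLeft g).hasSum_iff
        (f := fun h : G => ⟪π h f, π g x⟫ • π h f) (a := S (π g x))).mpr (hS (π g x))
      simpa [Function.comp_def] using h0
    have h2 : HasSum (fun h : G => ⟪π h f, x⟫ • π g (π h f)) (π g (S x)) := by
      have h0 := (hS x).mapL ((π g).toLinearIsometry.toContinuousLinearMap)
      simpa using h0
    have h3 : (fun h : G => ⟪π (g * h) f, π g x⟫ • π (g * h) f)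
        = fun h : G => ⟪π h f, x⟫ • π g (π h f) := by
      funext h
      have h4 : π (g * h) f = conj (μ g h) • π g (π h f) := by
        rw [hπ g h f, smul_smul, unimod_conj_mul (hμ_uni g h), one_smul]
      rw [h4, inner_smul_left, (π g).inner_map_map, smul_smul, Complex.conj_conj,
        show μ g h * ⟪π h f, x⟫ * conj (μ g h) = ⟪π h f, x⟫ by
          rw [mul_comm (μ g h) _, mul_assoc, unimod_mul_conj (hμ_uni g h), mul_one]]
    rw [h3] at h1
    exact h1.unique h2
  have hSRR : S * (R * R) = 1 := by
    ext x
    have h0 := ContinuousLinearMap.ext_iff.mp hSR x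
    simpa using h0
  have hRRS : (R * R) * S = 1 := by
    ext x
    have h0 := ContinuousLinearMap.ext_iff.mp hRS x
    simpa using h0
  have hSRcomm : S * R = R * S := by
    have hr : R * (R * S) = 1 := by rw [← mul_assoc]; exact hRRS
    have hl : (S * R) * R = 1 := by rw [mul_assoc]; exact hSRR
    calc S * R = (S * R) * (R * (R * S)) := by rw [hr, mul_one]
      _ = ((S * R) * R) * (R * S) := (mul_assoc _ _ _).symm
      _ = R * S := by rw [hl, one_mul]
  have hRSR : (R * S) * R = 1 := by rw [← hSRcomm, mul_assoc]; exact hSRR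
  have hRπ : ∀ (g : G) (x : H), R (π g x) = π g (R x) := by
    intro g
    set Tg : H →L[ℂ] H := (π g).toLinearIsometry.toContinuousLinearMap with hTgdef
    set Tg' : H →L[ℂ] H := (π g).symm.toLinearIsometry.toContinuousLinearMap with hTg'def
    have hTapp : ∀ x : H, Tg x = π g x := fun _ => rfl
    have hT'app : ∀ x : H, Tg' x = (π g).symm x := fun _ => rfl
    have hTT' : Tg * Tg' = 1 := by
      ext x
      simp [ContinuousLinearMap.mul_apply, hTapp, hT'app]
    have hT'T : Tg' * Tg = 1 := by
      ext x
      simp [ContinuousLinearMap.mul_apply, hTapp, hT'app]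
    have hST : S * Tg = Tg * S := by
      ext x
      simp only [ContinuousLinearMap.mul_apply, hTapp]
      exact hScomm g x
    have hRRT : Tg * (R * R) = (R * R) * Tg := by
      let u : (H →L[ℂ] H)ˣ := ⟨S, R * R, hSRR, hRRS⟩
      have h0 : Commute Tg (u : H →L[ℂ] H) := hST.symm
      have h1 : Commute Tg ((u⁻¹ : (H →L[ℂ] H)ˣ) : H →L[ℂ] H) := h0.units_inv_right
      exact h1
    have hadj : Tg' = ContinuousLinearMap.adjoint Tg := by
      rw [ContinuousLinearMap.eq_adjoint_iff]
      intro x y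
      rw [hT'app, hTapp]
      calc ⟪(π g).symm x, y⟫ = ⟪π g ((π g).symm x), π g y⟫ := ((π g).inner_map_map _ _).symm
        _ = ⟪x, π g y⟫ := by rw [(π g).apply_symm_apply]
    have hPpos : (Tg * R * Tg').IsPositive := by
      have h0 := hRpos.conj_adjoint Tg
      rw [← hadj] at h0
      have h1 : Tg ∘L R ∘L Tg' = Tg * R * Tg' := by
        ext x
        rfl
      rwa [h1] at h0
    have hsq : (Tg * R * Tg') * (Tg * R * Tg') = R * R := by
      have e1 : (Tg * R * Tg') * (Tg * R * Tg')
          = Tg * (R * ((Tg' * Tg) * (R * Tg'))) := by noncomm_ring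
      rw [hT'T, one_mul] at e1
      have e2 : Tg * (R * (R * Tg')) = (Tg * (R * R)) * Tg' := by noncomm_ring
      rw [e1, e2, hRRT, mul_assoc, hTT', mul_one]
    have hPR := pos_sq_inj R (Tg * R * Tg') hRpos hPpos hsq
    have e5 : (Tg * R * Tg') * Tg = R * Tg := by rw [hPR]
    have e6 : (Tg * R * Tg') * Tg = (Tg * R) * (Tg' * Tg) := by noncomm_ring
    rw [e6, hT'T, mul_one] at e5
    intro x
    have h7 := ContinuousLinearMap.ext_iff.mp e5 x
    simpa [ContinuousLinearMap.mul_apply, hTapp] using h7.symm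
  have hRsym : ∀ u v : H, ⟪R u, v⟫ = ⟪u, R v⟫ := fun u v =>
    (ContinuousLinearMap.isSelfAdjoint_iff_isSymmetric.mp hRpos.isSelfAdjoint) u v
  have hv : ∀ x : H, HasSum (fun g : G => ‖⟪π g f₁, x⟫‖ ^ 2) (‖x‖ ^ 2) := by
    intro x
    have h0 : ∀ g : G, ⟪π g f₁, x⟫ = ⟪π g f, R x⟫ := by
      intro g
      rw [hf₁, ← hRπ g f, hRsym]
    have h1 : HasSum (fun g : G => ⟪π g f, R x⟫ * ⟪R x, π g f⟫) ⟪R x, S (R x)⟫ := by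
      have h := (hS (R x)).mapL (innerSL ℂ (R x))
      simpa using h
    have h2 : (fun g : G => ⟪π g f, R x⟫ * ⟪R x, π g f⟫)
        = fun g : G => ((‖⟪π g f₁, x⟫‖ ^ 2 : ℝ) : ℂ) := by
      funext g
      rw [show ⟪R x, π g f⟫ = conj ⟪π g f, R x⟫ from
        (inner_conj_symm _ _).symm, mul_conj_norm', ← h0 g]
    have h3 : ⟪R x, S (R x)⟫ = ((‖x‖ ^ 2 : ℝ) : ℂ) := by
      have e0 : R (S (R x)) = x := by
        have h := ContinuousLinearMap.ext_iff.mp hRSR x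
        simpa [ContinuousLinearMap.mul_apply] using h
      rw [hRsym x (S (R x)), e0, inner_self_eq_norm_sq_to_K]
      norm_cast
    rw [h2, h3] at h1
    exact (Complex.hasSum_ofReal).mp h1
  -- analysis operator and its range
  let θ : H →ₗᵢ[ℂ] lp (fun _ : G => ℂ) 2 := analysisOp (fun g : G => π g f₁) hv
  have hθapp : ∀ (x : H) (g : G), (θ x : ∀ _ : G, ℂ) g = ⟪π g f₁, x⟫ := fun _ _ => rfl
  let Hs : Submodule ℂ (lp (fun _ : G => ℂ) 2) := LinearMap.range θ.toLinearMap
  have hHsmem : ∀ x : H, θ x ∈ Hs := fun x => ⟨x, rfl⟩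
  -- the twisted translation representation
  let Λ : G → (lp (fun _ : G => ℂ) 2 ≃ₗᵢ[ℂ] lp (fun _ : G => ℂ) 2) := fun g =>
    twist (Equiv.mulLeft g⁻¹) (fun h => μ g (g⁻¹ * h)) (fun h => hμ_uni _ _)
  have hΛapp : ∀ (g : G) (c : lp (fun _ : G => ℂ) 2) (h : G),
      (Λ g c : ∀ _ : G, ℂ) h = μ g (g⁻¹ * h) * c (g⁻¹ * h) := fun g c h => rfl
  have hcocycle' : ∀ g h k : G, μ g (g⁻¹ * k) * μ h (h⁻¹ * (g⁻¹ * k))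
      = μ (g * h) ((g * h)⁻¹ * k) * μ g h := by
    intro g h k
    have h0 := hμ_cocycle g h (h⁻¹ * (g⁻¹ * k))
    rw [show h * (h⁻¹ * (g⁻¹ * k)) = g⁻¹ * k by group] at h0
    rw [show (g * h)⁻¹ * k = h⁻¹ * (g⁻¹ * k) by group]
    exact h0
  have hΛmul : ∀ (g h : G) (c : lp (fun _ : G => ℂ) 2), Λ g (Λ h c) = μ g h • Λ (g * h) c := by
    intro g h c
    apply lp.ext
    funext k
    have hL : (Λ g (Λ h c) : ∀ _ : G, ℂ) k
        = (μ g (g⁻¹ * k) * μ h (h⁻¹ * (g⁻¹ * k))) * c (h⁻¹ * (g⁻¹ * k)) := by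
      rw [hΛapp, hΛapp]
      ring
    have hRr : ((μ g h • Λ (g * h) c : lp (fun _ : G => ℂ) 2) : ∀ _ : G, ℂ) k
        = (μ (g * h) ((g * h)⁻¹ * k) * μ g h) * c ((g * h)⁻¹ * k) := by
      rw [lp.coeFn_smul, Pi.smul_apply, hΛapp, smul_eq_mul]
      ring
    rw [hL, hRr, hcocycle' g h k, show (g * h)⁻¹ * k = h⁻¹ * (g⁻¹ * k) by group]
  have hΛθ : ∀ (g : G) (x : H), Λ g (θ x) = θ (π g x) := by
    intro g x
    apply lp.ext
    funext h
    have hsc : μ g (g⁻¹ * h) = μ g g⁻¹ * conj (μ g⁻¹ h) := by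
      have h0 := hμ_cocycle g g⁻¹ h
      rw [mul_inv_cancel, (hμ_one h).2, one_mul] at h0
      calc μ g (g⁻¹ * h) = μ g (g⁻¹ * h) * (μ g⁻¹ h * conj (μ g⁻¹ h)) := by
            rw [unimod_mul_conj (hμ_uni _ _), mul_one]
        _ = (μ g (g⁻¹ * h) * μ g⁻¹ h) * conj (μ g⁻¹ h) := by ring
        _ = μ g g⁻¹ * conj (μ g⁻¹ h) := by rw [h0]
    rw [hΛapp, hθapp, hθapp]
    have h1 : ⟪π h f₁, π g x⟫ = ⟪(π g).symm (π h f₁), x⟫ := by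
      conv_lhs => rw [← (π g).apply_symm_apply (π h f₁)]
      rw [(π g).inner_map_map]
    rw [h1, hπsymm, hπ g⁻¹ h f₁, inner_smul_left, inner_smul_left, Complex.conj_conj, hsc]
    ring
  have hΛsymmθ : ∀ (g : G) (x : H), (Λ g).symm (θ x) = θ ((π g).symm x) := by
    intro g x
    apply (Λ g).injective
    rw [(Λ g).apply_symm_apply, hΛθ, (π g).apply_symm_apply]
  have hmem1 : ∀ (g : G), ∀ y ∈ Hsᗮ, Λ g y ∈ Hsᗮ := by
    intro g y hy
    rw [Submodule.mem_orthogonal]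
    rintro u ⟨x, rfl⟩
    have h1 := (Λ g).inner_map_map ((Λ g).symm (θ x)) y
    rw [(Λ g).apply_symm_apply, hΛsymmθ] at h1
    rw [show (θ.toLinearMap x : lp (fun _ : G => ℂ) 2) = θ x from rfl, h1]
    exact (Submodule.mem_orthogonal _ _).mp hy _ (hHsmem _)
  have hmem2 : ∀ (g : G), ∀ y ∈ Hsᗮ, (Λ g).symm y ∈ Hsᗮ := by
    intro g y hy
    rw [Submodule.mem_orthogonal]
    rintro u ⟨x, rfl⟩
    have h1 := (Λ g).inner_map_map (θ x) ((Λ g).symm y)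
    rw [(Λ g).apply_symm_apply, hΛθ] at h1
    rw [show (θ.toLinearMap x : lp (fun _ : G => ℂ) 2) = θ x from rfl, ← h1]
    exact (Submodule.mem_orthogonal _ _).mp hy _ (hHsmem _)
  haveI hKc : CompleteSpace (↥(Hsᗮ)) := (Submodule.isClosed_orthogonal Hs).completeSpace_coe
  let π' : G → (↥(Hsᗮ) ≃ₗᵢ[ℂ] ↥(Hsᗮ)) := fun g => restrictLIE (Λ g) Hsᗮ (hmem1 g) (hmem2 g)
  let δ : G → lp (fun _ : G => ℂ) 2 := fun g => lp.single 2 g 1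
  have hδapp : ∀ g k : G, (δ g : ∀ _ : G, ℂ) k = if k = g then 1 else 0 := by
    intro g k
    by_cases h : k = g
    · subst h; rw [if_pos rfl]; exact lp.single_apply_self 2 k 1
    · rw [if_neg h]; exact lp.single_apply_ne 2 g 1 h
  have hΛδ : ∀ g : G, Λ g (δ 1) = δ g := by
    intro g
    apply lp.ext
    funext k
    rw [hΛapp, hδapp, hδapp]
    by_cases h : k = g
    · subst h
      rw [if_pos rfl, if_pos (inv_mul_cancel k), inv_mul_cancel, (hμ_one k).1, mul_one]
    · rw [if_neg h, if_neg (fun hc => h (inv_mul_eq_one.mp hc).symm), mul_zero]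
  have hδinner : ∀ (g : G) (c : lp (fun _ : G => ℂ) 2), ⟪δ g, c⟫ = c g := by
    intro g c
    have h := lp.inner_single_left (𝕜 := ℂ) g (1 : ℂ) c
    simpa using h
  have hinnerδ : ∀ (c : lp (fun _ : G => ℂ) 2) (g : G), ⟪c, δ g⟫ = conj (c g) := by
    intro c g
    have h := lp.inner_single_right (𝕜 := ℂ) g (1 : ℂ) c
    simpa using h
  have hθinner : ∀ x u : H, ⟪θ x, θ u⟫ = ⟪x, u⟫ := fun x u => θ.inner_map_map x u
  have hf₂mem : δ 1 - θ f₁ ∈ Hsᗮ := by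
    rw [Submodule.mem_orthogonal]
    rintro u ⟨x, rfl⟩
    rw [show (θ.toLinearMap x : lp (fun _ : G => ℂ) 2) = θ x from rfl,
      inner_sub_right, hinnerδ, hθinner, hθapp, hπ1, inner_conj_symm, sub_self]
  let f₂ : ↥(Hsᗮ) := ⟨δ 1 - θ f₁, hf₂mem⟩
  have hπ'f₂ : ∀ g : G, ((π' g f₂ : ↥(Hsᗮ)) : lp (fun _ : G => ℂ) 2) = δ g - θ (π g f₁) := by
    intro g
    show Λ g (δ 1 - θ f₁) = δ g - θ (π g f₁)
    rw [map_sub, hΛδ, hΛθ]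
  have hkey : ∀ (g : G) (y : ↥(Hsᗮ)), ⟪π' g f₂, y⟫ = (y : ∀ _ : G, ℂ) g := by
    intro g y
    rw [Submodule.coe_inner, hπ'f₂, inner_sub_left, hδinner,
      (Submodule.mem_orthogonal _ _).mp y.2 _ (hHsmem (π g f₁)), sub_zero]
  have hrep : ∀ (g h : G) (y : ↥(Hsᗮ)), π' g (π' h y) = μ g h • π' (g * h) y := by
    intro g h y
    apply Subtype.ext
    show Λ g (Λ h (y : lp (fun _ : G => ℂ) 2)) = μ g h • Λ (g * h) (y : lp (fun _ : G => ℂ) 2)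
    exact hΛmul g h _
  have hParseval : ∀ y : ↥(Hsᗮ), ∑' g : G, ‖⟪π' g f₂, y⟫‖ ^ 2 = ‖y‖ ^ 2 := by
    intro y
    have h2 : (0:ℝ) < (2 : ℝ≥0∞).toReal := by norm_num
    calc ∑' g : G, ‖⟪π' g f₂, y⟫‖ ^ 2 = ∑' g : G, ‖(y : ∀ _ : G, ℂ) g‖ ^ 2 :=
          tsum_congr fun g => by rw [hkey]
      _ = ‖y‖ ^ 2 := by
          have h1 := lp.norm_rpow_eq_tsum h2 (y : lp (fun _ : G => ℂ) 2)
          rw [tsum_congr (fun g : G => rpow_toReal_two ‖(y : ∀ _ : G, ℂ) g‖),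
            rpow_toReal_two] at h1
          exact h1.symm
  refine ⟨↥(Hsᗮ), inferInstance, inferInstance, inferInstance, π', f₂, hrep, hParseval, ?_, ?_⟩
  · rw [orthonormal_iff_ite]
    intro g h
    rw [WithLp.prod_inner_apply]
    simp only [WithLp.equiv_symm_apply]
    have e2 : ⟪π' g f₂, π' h f₂⟫ = (if g = h then (1:ℂ) else 0) - ⟪π g f₁, π h f₁⟫ := by
      rw [Submodule.coe_inner, hπ'f₂, hπ'f₂, inner_sub_left, inner_sub_right, inner_sub_right,
        hδinner g (δ h), hδapp h g, hδinner g (θ (π h f₁)), hθapp, hinnerδ (θ (π g f₁)) h,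
        hθapp, hθinner, inner_conj_symm]
      ring
    rw [e2]
    ring
  · rw [Submodule.topologicalClosure_eq_top_iff, Submodule.eq_bot_iff]
    intro z hz
    have hz' : ∀ g : G,
        ⟪(WithLp.equiv 2 (H × ↥(Hsᗮ))).symm (π g f₁, π' g f₂), z⟫ = 0 :=
      fun g => (Submodule.mem_orthogonal _ z).mp hz _ (Submodule.subset_span ⟨g, rfl⟩)
    have hcomp : ∀ g : G, (θ z.fst : ∀ _ : G, ℂ) g
        + ((z.snd : lp (fun _ : G => ℂ) 2) : ∀ _ : G, ℂ) g = 0 := by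
      intro g
      have h0 := hz' g
      rw [WithLp.prod_inner_apply] at h0
      simp only [WithLp.equiv_symm_apply] at h0
      change ⟪π g f₁, z.fst⟫ + ⟪π' g f₂, z.snd⟫ = 0 at h0
      rw [hkey g z.snd, ← hθapp z.fst g] at h0
      exact h0
    have hsum : θ z.fst + (z.snd : lp (fun _ : G => ℂ) 2) = 0 := by
      apply lp.ext
      funext g
      rw [lp.coeFn_add, Pi.add_apply, lp.coeFn_zero, Pi.zero_apply]
      exact hcomp g
    have hyHs : ((z.snd : lp (fun _ : G => ℂ) 2)) ∈ Hs := by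
      have he : (z.snd : lp (fun _ : G => ℂ) 2) = -(θ z.fst) :=
        eq_neg_of_add_eq_zero_right hsum
      rw [he]
      exact Submodule.neg_mem _ (hHsmem _)
    have hy0' : (z.snd : lp (fun _ : G => ℂ) 2) = 0 := by
      have h1 : (z.snd : lp (fun _ : G => ℂ) 2) ∈ Hs ⊓ Hsᗮ := ⟨hyHs, z.snd.2⟩
      rw [Submodule.inf_orthogonal_eq_bot] at h1
      exact (Submodule.mem_bot ℂ).mp h1
    have hy0 : z.snd = 0 := Subtype.ext hy0'
    have hx0 : z.fst = 0 := by
      have h1 : θ z.fst = 0 := by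
        have h2 := hsum
        rw [hy0', add_zero] at h2
        exact h2
      exact θ.injective (by rw [h1, map_zero])
    have hez : (WithLp.equiv 2 (H × ↥(Hsᗮ))) z = 0 := Prod.ext hx0 hy0
    calc z = (WithLp.equiv 2 (H × ↥(Hsᗮ))).symm ((WithLp.equiv 2 (H × ↥(Hsᗮ))) z) :=
          (Equiv.symm_apply_apply _ _).symm
      _ = (WithLp.equiv 2 (H × ↥(Hsᗮ))).symm 0 := by rw [hez]
      _ = 0 := rfl
end

section
/- Let D, T be unitary operators on a complex Hilbert space H satisfying DTD⁻¹ = T², and let ψ ∈ H be such that {DʲTᵏψ : j,k ∈ ℤ} is a frame for H with frame operator S. Suppose there exist: unitary operators D', T' on a complex Hilbert space K with D'T'(D')⁻¹ = (T')², vectors ψ₁ ∈ H and ψ₂ ∈ K such that {(DʲTᵏψ₁) ⊕ ((D')ʲ(T')ᵏψ₂) : j,k ∈ ℤ} is an orthonormal basis of H ⊕ K, and a positive operator E : H → H with E(DʲTᵏψ₁) = DʲTᵏψ for all j,k ∈ ℤ. Then E² = S, Eψ₁ = ψ, and S^{-1/2}(DʲTᵏψ) = DʲTᵏ(S^{-1/2}ψ)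 for all j,k ∈ ℤ; i.e., S^{-1/2} lies in the local commutant of {DʲTᵏ : j,k ∈ ℤ} at ψ. -/
local notation "⟪" x ", " y "⟫" => @inner ℂ _ _ x y

/-- **Necessity of the local commutant condition for dilation of frame wavelets.**
Let `{D,T}` be a representation of `BS(1,2)` on `H` (`DTD⁻¹ = T²`) and `ψ` a frame wavelet
with frame operator `S`. If there exist a representation `{D',T'}` of `BS(1,2)` on `K`,
vectors `ψ₁ ∈ H`, `ψ₂ ∈ K` such that `{DʲTᵏψ₁ ⊕ (D')ʲ(T')ᵏψ₂}` is an orthonormal basis of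
`H ⊕ K`, and a positive operator `E` with `E(DʲTᵏψ₁) = DʲTᵏψ`, then `E² = S`, `Eψ₁ = ψ`,
and `S^{-1/2}` lies in the local commutant of `{DʲTᵏ}` at `ψ`:
`S^{-1/2}(DʲTᵏψ) = DʲTᵏ(S^{-1/2}ψ)`. -/
theorem frame_wavelet_dilation_necessity
    {H : Type} [NormedAddCommGroup H] [InnerProductSpace ℂ H] [CompleteSpace H]
    -- `{D, T}` is a representation of the Baumslag–Solitar group `BS(1,2)`
    (D T : H ≃ₗᵢ[ℂ] H) (hDT : D * T * D⁻¹ = T ^ 2)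
    -- `{DʲTᵏψ}` is a frame for `H`
    (ψ : H) (A B : ℝ) (hA : 0 < A) (hAB : A ≤ B)
    (hframe : ∀ x : H,
      A * ‖x‖ ^ 2 ≤ ∑' p : ℤ × ℤ, ‖⟪(D ^ p.1) ((T ^ p.2) ψ), x⟫‖ ^ 2 ∧
      ∑' p : ℤ × ℤ, ‖⟪(D ^ p.1) ((T ^ p.2) ψ), x⟫‖ ^ 2 ≤ B * ‖x‖ ^ 2)
    -- `S` is the frame operator of `{DʲTᵏψ}`
    (S : H →L[ℂ] H)
    (hS : ∀ x : H, HasSum (fun p : ℤ × ℤ => ⟪(D ^ p.1) ((T ^ p.2) ψ), x⟫ •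
      (D ^ p.1) ((T ^ p.2) ψ)) (S x))
    -- `R = S^{-1/2}`: the positive square root of the inverse of `S`
    (R : H →L[ℂ] H) (hRpos : R.IsPositive)
    (hRS : (R ∘L R) ∘L S = ContinuousLinearMap.id ℂ H)
    (hSR : S ∘L (R ∘L R) = ContinuousLinearMap.id ℂ H)
    -- a representation `{D', T'}` of `BS(1,2)` on a Hilbert space `K`
    {K : Type} [NormedAddCommGroup K] [InnerProductSpace ℂ K] [CompleteSpace K]
    (D' T' : K ≃ₗᵢ[ℂ] K) (hDT' : D' * T' * D'⁻¹ = T' ^ 2)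
    -- `{DʲTᵏψ₁ ⊕ (D')ʲ(T')ᵏψ₂}` is an orthonormal basis of `H ⊕ K`
    (ψ₁ : H) (ψ₂ : K)
    (honb₁ : Orthonormal ℂ (fun p : ℤ × ℤ =>
      (WithLp.equiv 2 (H × K)).symm ((D ^ p.1) ((T ^ p.2) ψ₁), (D' ^ p.1) ((T' ^ p.2) ψ₂))))
    (honb₂ : (Submodule.span ℂ (Set.range fun p : ℤ × ℤ =>
      (WithLp.equiv 2 (H × K)).symm ((D ^ p.1) ((T ^ p.2) ψ₁),
        (D' ^ p.1) ((T' ^ p.2) ψ₂)))).topologicalClosure = ⊤)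
    -- `E` is a positive operator with `E(DʲTᵏψ₁) = DʲTᵏψ`
    (E : H →L[ℂ] H) (hEpos : E.IsPositive)
    (hE : ∀ j k : ℤ, E ((D ^ j) ((T ^ k) ψ₁)) = (D ^ j) ((T ^ k) ψ)) :
    -- `E² = S`, `Eψ₁ = ψ`, and `S^{-1/2}(DʲTᵏψ) = DʲTᵏ(S^{-1/2}ψ)`
    E ∘L E = S ∧ E ψ₁ = ψ ∧
    (∀ j k : ℤ, R ((D ^ j) ((T ^ k) ψ)) = (D ^ j) ((T ^ k) (R ψ))) := by
  classical
  -- the orthonormal family is a Hilbert basis of `H ⊕ K`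
  set v : ℤ × ℤ → WithLp 2 (H × K) := fun p =>
    (WithLp.equiv 2 (H × K)).symm ((D ^ p.1) ((T ^ p.2) ψ₁), (D' ^ p.1) ((T' ^ p.2) ψ₂))
    with hv
  let b : HilbertBasis (ℤ × ℤ) ℂ (WithLp 2 (H × K)) := HilbertBasis.mk honb₁ honb₂.ge
  have hb : ∀ p, b p = v p := fun p => congrFun (HilbertBasis.coe_mk honb₁ honb₂.ge) p
  -- the first-coordinate projection
  let P : WithLp 2 (H × K) →L[ℂ] H :=
    (ContinuousLinearMap.fst ℂ H K) ∘L
      (WithLp.prodContinuousLinearEquiv 2 ℂ H K : WithLp 2 (H × K) →L[ℂ] H × K)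
  have hP : ∀ z : WithLp 2 (H × K), P z = ((WithLp.equiv 2 (H × K)) z).1 := fun z => rfl
  have hEsymm := hEpos.isSymmetric
  -- key computation: `E (E x) = S x`
  have hEE : ∀ x : H, E (E x) = S x := by
    intro x
    set z : WithLp 2 (H × K) := (WithLp.equiv 2 (H × K)).symm (E x, 0) with hz
    have hrepr : ∀ p : ℤ × ℤ, b.repr z p = ⟪(D ^ p.1) ((T ^ p.2) ψ), x⟫ := by
      intro p
      rw [b.repr_apply_apply, hb p, hv]
      simp only [hz, WithLp.prod_inner_apply, WithLp.equiv_symm_apply, WithLp.ofLp_toLp,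
        inner_zero_right, add_zero]
      rw [← hE p.1 p.2]
      exact (hEsymm _ _).symm
    have hsum := b.hasSum_repr z
    have hsum1 : HasSum (fun p : ℤ × ℤ =>
        ⟪(D ^ p.1) ((T ^ p.2) ψ), x⟫ • (D ^ p.1) ((T ^ p.2) ψ₁)) (E x) := by
      have := hsum.mapL P
      have hPz : P z = E x := by rw [hP, hz]; simp
      rw [hPz] at this
      refine this.congr_fun ?_
      intro p
      rw [map_smul, hrepr p, hb p, hv, hP]
      simp
    have hsum2 : HasSum (fun p : ℤ × ℤ =>
        ⟪(D ^ p.1) ((T ^ p.2) ψ), x⟫ • (D ^ p.1) ((T ^ p.2) ψ)) (E (E x)) := by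
      have := hsum1.mapL E
      refine this.congr_fun ?_
      intro p
      rw [map_smul, hE p.1 p.2]
    exact hsum2.unique (hS x)
  have hES : E ∘L E = S := ContinuousLinearMap.ext hEE
  -- `E ψ₁ = ψ`
  have hEψ : E ψ₁ = ψ := by
    have := hE 0 0
    simpa using this
  refine ⟨hES, hEψ, ?_⟩
  -- now prove `R ∘L E = 1` using uniqueness of positive square roots
  have hmulES : E * E = S := hES
  have h1 : (R * R) * (E * E) = 1 := by rw [hmulES]; exact hRS
  have h2 : (E * E) * (R * R) = 1 := by rw [hmulES]; exact hSR
  have hL : ((R * R) * E) * E = 1 := by rw [mul_assoc]; exact h1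
  have hR' : E * (E * (R * R)) = 1 := by rw [← mul_assoc]; exact h2
  have hLR : (R * R) * E = E * (R * R) := by
    calc (R * R) * E = ((R * R) * E) * (E * (E * (R * R))) := by rw [hR', mul_one]
    _ = (((R * R) * E) * E) * (E * (R * R)) := by simp only [mul_assoc]
    _ = E * (R * R) := by rw [hL, one_mul]
  have hEF : E * ((R * R) * E) = 1 := by rw [hLR]; exact hR'
  have hEFapp : ∀ x : H, E (((R * R) * E) x) = x := by
    intro x
    have := congrArg (fun G : H →L[ℂ] H => G x) hEF
    simpa using this
  have hFsa : IsSelfAdjoint ((R * R) * E) := by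
    have hRR : IsSelfAdjoint (R * R) := by rw [IsSelfAdjoint, star_mul, hRpos.isSelfAdjoint.star_eq]
    rw [IsSelfAdjoint, star_mul, hRR.star_eq, hEpos.isSelfAdjoint.star_eq, ← hLR]
  have hFpos : ((R * R) * E).IsPositive := by
    refine ⟨hFsa.isSymmetric, fun x => ?_⟩
    rw [ContinuousLinearMap.reApplyInnerSelf_apply]
    have hx : x = E (((R * R) * E) x) := (hEFapp x).symm
    calc (0 : ℝ) ≤ RCLike.re ⟪E (((R * R) * E) x), ((R * R) * E) x⟫ := by
          have h := hEpos.2 (((R * R) * E) x)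
          rwa [ContinuousLinearMap.reApplyInnerSelf_apply] at h
    _ = RCLike.re ⟪((R * R) * E) x, E (((R * R) * E) x)⟫ := congrArg RCLike.re (hEsymm _ _)
    _ = RCLike.re ⟪((R * R) * E) x, x⟫ := by rw [← hx]
  have h0F : (0 : H →L[ℂ] H) ≤ (R * R) * E :=
    (ContinuousLinearMap.nonneg_iff_isPositive _).mpr hFpos
  have h0R : (0 : H →L[ℂ] H) ≤ R := (ContinuousLinearMap.nonneg_iff_isPositive R).mpr hRpos
  have hFF : ((R * R) * E) * ((R * R) * E) = R * R := by
    calc ((R * R) * E) * ((R * R) * E) = ((R * R) * E) * (E * (R * R)) := by rw [← hLR]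
    _ = (R * R) * ((E * E) * (R * R)) := by simp only [mul_assoc]
    _ = R * R := by rw [h2, mul_one]
  have e1 : CFC.sqrt (R * R) = (R * R) * E := CFC.sqrt_unique hFF h0F
  have e2 : CFC.sqrt (R * R) = R := CFC.sqrt_unique rfl h0R
  have hRF : R = (R * R) * E := e2.symm.trans e1
  have hRE1 : R * E = 1 := by rw [hRF]; exact hL
  have hREapp : ∀ x : H, R (E x) = x := by
    intro x
    have := congrArg (fun G : H →L[ℂ] H => G x) hRE1
    simpa using this
  intro j k
  rw [← hE j k, hREapp, ← hEψ, hREapp]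
end
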